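/- Fix an integer N ≥ 1, a constant C₀ > 0 and β ∈ (0,1). Then there exists L₀ > 0 such that for all L ≥ L₀ the following holds: let D be an N×N real matrix with operator norm ‖D‖ ≤ C₀·L and |det D| ≥ L^{N-(1-β)}, and let A : ℝ^N × ℝ^N → ℝ^N × ℝ^N be the block linear map A(u,v) = (Du − v, u). Then for every w = (u,v) with ‖v‖ ≤ (1/10)‖u‖, the image A(w) again lies in the cone C^x_{1/10} and ‖A(w)‖ ≥ L^{2β/3}·‖w‖. -/

import Mathlib

open scoped Real

section AuxStatement0

open Finset Matrix

lemma abs_coord_le {n : ℕ} (x : EuclideanSpace ℝ (Fin n)) (i : Fin n) : |x i| ≤ ‖x‖ := by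
  rw [EuclideanSpace.norm_eq, show |x i| = Real.sqrt (‖x i‖^2) by
    rw [Real.sqrt_sq_eq_abs, Real.norm_eq_abs, abs_abs]]
  exact Real.sqrt_le_sqrt (Finset.single_le_sum (f := fun j => ‖x j‖^2)
    (fun j _ => by positivity) (Finset.mem_univ i))

lemma toEuclideanLin_norm_le {n : ℕ} (M : Matrix (Fin n) (Fin n) ℝ) {c : ℝ} (hc : 0 ≤ c)
    (h : ∀ i j, |M i j| ≤ c) (x : EuclideanSpace ℝ (Fin n)) :
    ‖Matrix.toEuclideanLin M x‖ ≤ ((n:ℝ)^2 * c) * ‖x‖ := by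
  have hcoord : ∀ i, |(Matrix.toEuclideanLin M x) i| ≤ (n:ℝ) * c * ‖x‖ := by
    intro i
    have : (Matrix.toEuclideanLin M x) i = ∑ j, M i j * x j := by
      simp [Matrix.toEuclideanLin_apply, Matrix.mulVec, dotProduct]
    rw [this]
    calc |∑ j, M i j * x j| ≤ ∑ j, |M i j * x j| := Finset.abs_sum_le_sum_abs _ _
      _ ≤ ∑ _j : Fin n, c * ‖x‖ := by
          refine Finset.sum_le_sum fun j _ => ?_
          rw [abs_mul]
          exact mul_le_mul (h i j) (abs_coord_le x j) (abs_nonneg _) hc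
      _ = (n:ℝ) * c * ‖x‖ := by simp [mul_assoc]
  have hx0 : (0:ℝ) ≤ ‖x‖ := norm_nonneg x
  rw [EuclideanSpace.norm_eq]
  have : ∑ i, ‖(Matrix.toEuclideanLin M x) i‖^2 ≤ (((n:ℝ)^2*c)*‖x‖)^2 := by
    calc ∑ i, ‖(Matrix.toEuclideanLin M x) i‖^2
        ≤ ∑ _i : Fin n, ((n:ℝ)*c*‖x‖)^2 := by
          refine Finset.sum_le_sum fun i _ => ?_
          rw [Real.norm_eq_abs, ← sq_abs, abs_abs]
          exact pow_le_pow_left₀ (abs_nonneg _) (hcoord i) 2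
      _ = (n:ℝ) * ((n:ℝ)*c*‖x‖)^2 := by simp [mul_comm]
      _ ≤ (((n:ℝ)^2*c)*‖x‖)^2 := by
          have h34 : (n:ℝ)^3 ≤ (n:ℝ)^4 := by
            have h' : (n:ℕ)^3 ≤ (n:ℕ)^4 := by
              rcases Nat.eq_zero_or_pos n with h0|h0
              · simp [h0]
              · exact Nat.pow_le_pow_right h0 (by omega)
            exact_mod_cast h'
          nlinarith [h34, sq_nonneg (c*‖x‖), hx0, hc]
  calc Real.sqrt (∑ i, ‖(Matrix.toEuclideanLin M x) i‖^2) ≤ Real.sqrt ((((n:ℝ)^2*c)*‖x‖)^2) :=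
        Real.sqrt_le_sqrt this
    _ = ((n:ℝ)^2*c)*‖x‖ := Real.sqrt_sq (by positivity)

lemma entry_abs_le {n : ℕ} (D : EuclideanSpace ℝ (Fin n) →L[ℝ] EuclideanSpace ℝ (Fin n))
    (M : Matrix (Fin n) (Fin n) ℝ)
    (hM : Matrix.toEuclideanLin M = (D : EuclideanSpace ℝ (Fin n) →ₗ[ℝ] EuclideanSpace ℝ (Fin n)))
    (i j : Fin n) : |M i j| ≤ ‖D‖ := by
  have h1 : (D (EuclideanSpace.single j (1:ℝ))) i = M i j := by
    rw [show D (EuclideanSpace.single j (1:ℝ))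
        = Matrix.toEuclideanLin M (EuclideanSpace.single j (1:ℝ)) by rw [hM]; rfl,
      show EuclideanSpace.single j (1:ℝ) = WithLp.toLp 2 (Pi.single j 1)
        from rfl,
      Matrix.toEuclideanLin_apply_piLp_toLp]
    show (M *ᵥ Pi.single j 1) i = M i j
    rw [Matrix.mulVec_single]
    simp
  calc |M i j| = |(D (EuclideanSpace.single j (1:ℝ))) i| := by rw [h1]
    _ ≤ ‖D (EuclideanSpace.single j (1:ℝ))‖ := abs_coord_le _ i
    _ ≤ ‖D‖ * ‖EuclideanSpace.single j (1:ℝ)‖ := ContinuousLinearMap.le_opNorm D _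
    _ = ‖D‖ := by rw [EuclideanSpace.norm_single, norm_one, mul_one]

lemma key {n : ℕ} (D : EuclideanSpace ℝ (Fin (n+1)) →L[ℝ] EuclideanSpace ℝ (Fin (n+1)))
    (u : EuclideanSpace ℝ (Fin (n+1))) :
    |LinearMap.det (D : EuclideanSpace ℝ (Fin (n+1)) →ₗ[ℝ] EuclideanSpace ℝ (Fin (n+1)))| * ‖u‖ ≤
      (((n+1:ℕ):ℝ)^2 * ((Nat.factorial n : ℝ) * ‖D‖^n)) * ‖D u‖ := by
  set M := Matrix.toEuclideanLin.symm
    (D : EuclideanSpace ℝ (Fin (n+1)) →ₗ[ℝ] EuclideanSpace ℝ (Fin (n+1))) with hMdef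
  have hM : Matrix.toEuclideanLin M
      = (D : EuclideanSpace ℝ (Fin (n+1)) →ₗ[ℝ] EuclideanSpace ℝ (Fin (n+1))) :=
    LinearEquiv.apply_symm_apply _ _
  have hdet : LinearMap.det
      (D : EuclideanSpace ℝ (Fin (n+1)) →ₗ[ℝ] EuclideanSpace ℝ (Fin (n+1))) = M.det := by
    rw [← hM, ← LinearMap.det_toLin' M]
    exact LinearMap.det_conj (Matrix.toLin' M) (WithLp.linearEquiv 2 ℝ (Fin (n+1) → ℝ)).symm
  have hentry : ∀ i j, |M i j| ≤ ‖D‖ := entry_abs_le D M hM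
  have hadj : ∀ i j, |Matrix.adjugate M i j| ≤ (Nat.factorial n : ℝ) * ‖D‖^n := by
    intro i j
    rw [Matrix.adjugate_fin_succ_eq_det_submatrix, abs_mul, abs_pow, abs_neg, abs_one, one_pow,
      one_mul]
    have h := Matrix.det_le (A := M.submatrix j.succAbove i.succAbove)
      (abv := AbsoluteValue.abs) (x := ‖D‖) (fun a b => hentry _ _)
    simpa [nsmul_eq_mul] using h
  have hmain : (M.det : ℝ) • u = Matrix.toEuclideanLin (Matrix.adjugate M) (D u) := by
    have h1 : D u = Matrix.toEuclideanLin M u := by rw [hM]; rfl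
    rw [h1]
    have h2 : Matrix.toEuclideanLin (Matrix.adjugate M) (Matrix.toEuclideanLin M u)
        = Matrix.toEuclideanLin (Matrix.adjugate M * M) u := by
      simp only [Matrix.toEuclideanLin_apply, Equiv.apply_symm_apply, Matrix.mulVec_mulVec]
    rw [h2, Matrix.adjugate_mul]
    simp only [Matrix.toEuclideanLin_apply, Matrix.smul_mulVec, Matrix.one_mulVec]
    rw [WithLp.toLp_smul]
  calc |LinearMap.det (D : EuclideanSpace ℝ (Fin (n+1)) →ₗ[ℝ] EuclideanSpace ℝ (Fin (n+1)))| * ‖u‖ = ‖(M.det : ℝ) • u‖ := by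
        rw [hdet, norm_smul, Real.norm_eq_abs]
    _ = ‖Matrix.toEuclideanLin (Matrix.adjugate M) (D u)‖ := by rw [hmain]
    _ ≤ (((n+1:ℕ):ℝ)^2 * ((Nat.factorial n : ℝ) * ‖D‖^n)) * ‖D u‖ :=
        toEuclideanLin_norm_le _ (by positivity) hadj _

set_option maxHeartbeats 1000000


/-- Hyperbolicity lemma, part (a): for `L` large, the block map
`A(u,v) = (Du - v, u)` preserves the horizontal cone `C^x_{1/10}` and expands vectors in it
by a factor at least `L^(2β/3)`, whenever `‖D‖ ≤ C₀ L` and `|det D| ≥ L^(N-(1-β))`. -/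
theorem statement0 (N : ℕ) (hN : 1 ≤ N) (C₀ : ℝ) (hC₀ : 0 < C₀)
    (β : ℝ) (hβ : β ∈ Set.Ioo (0 : ℝ) 1) :
    ∃ L₀ : ℝ, 0 < L₀ ∧ ∀ L : ℝ, L₀ ≤ L →
      ∀ D : EuclideanSpace ℝ (Fin N) →L[ℝ] EuclideanSpace ℝ (Fin N),
        ‖D‖ ≤ C₀ * L →
        L ^ ((N : ℝ) - (1 - β)) ≤
          |LinearMap.det (D : EuclideanSpace ℝ (Fin N) →ₗ[ℝ] EuclideanSpace ℝ (Fin N))| →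
        ∀ u v : EuclideanSpace ℝ (Fin N),
          ‖v‖ ≤ (1 / 10) * ‖u‖ →
          ‖u‖ ≤ (1 / 10) * ‖D u - v‖ ∧
            L ^ ((2 / 3) * β) * Real.sqrt (‖u‖ ^ 2 + ‖v‖ ^ 2) ≤
              Real.sqrt (‖D u - v‖ ^ 2 + ‖u‖ ^ 2) := by
  obtain ⟨hβ0, hβ1⟩ := hβ
  have hβne : β ≠ 0 := ne_of_gt hβ0
  obtain ⟨n, rfl⟩ : ∃ n : ℕ, N = n + 1 := ⟨N - 1, by omega⟩
  set Kc : ℝ := ((n+1:ℕ):ℝ)^2 * ((Nat.factorial n : ℝ) * C₀^n) with hKcdef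
  have hKc0 : (0:ℝ) ≤ Kc := by positivity
  set K : ℝ := Kc + 1 with hKdef
  have hK1 : (1:ℝ) ≤ K := by linarith
  have hK0 : (0:ℝ) < K := by linarith
  refine ⟨(13*K)^((3:ℝ)/β), Real.rpow_pos_of_pos (by linarith) _, ?_⟩
  intro L hL D hDnorm hdet u v huv
  have hL1 : (1:ℝ) ≤ L := le_trans (Real.one_le_rpow (by linarith) (by positivity)) hL
  have hL0 : (0:ℝ) < L := by linarith
  have hDu : L^β * ‖u‖ ≤ K * ‖D u‖ := by
    have hkey := key D u
    have hDn : ‖D‖^n ≤ (C₀*L)^n := pow_le_pow_left₀ (norm_nonneg D) hDnorm n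
    have hLn : (0:ℝ) < L^n := pow_pos hL0 n
    have h2 : ((n+1:ℕ):ℝ)^2 * ((Nat.factorial n:ℝ) * ‖D‖^n) ≤ Kc * L^n := by
      calc ((n+1:ℕ):ℝ)^2 * ((Nat.factorial n:ℝ) * ‖D‖^n)
          ≤ ((n+1:ℕ):ℝ)^2 * ((Nat.factorial n:ℝ) * ((C₀*L)^n)) := by gcongr
        _ = Kc * L^n := by rw [hKcdef, mul_pow]; ring
    have h1 : |LinearMap.det
        (D : EuclideanSpace ℝ (Fin (n+1)) →ₗ[ℝ] EuclideanSpace ℝ (Fin (n+1)))| * ‖u‖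
        ≤ (Kc * L^n) * ‖D u‖ :=
      hkey.trans (mul_le_mul_of_nonneg_right h2 (norm_nonneg _))
    have hexp : L ^ (((n+1:ℕ):ℝ) - (1-β)) = L^n * L^β := by
      rw [show ((n+1:ℕ):ℝ) - (1-β) = (n:ℝ) + β by push_cast; ring,
        Real.rpow_add hL0, Real.rpow_natCast]
    have h3 : L^n * L^β * ‖u‖ ≤ (Kc * L^n) * ‖D u‖ := by
      refine le_trans ?_ (le_trans (mul_le_mul_of_nonneg_right hdet (norm_nonneg u)) h1)
      rw [hexp]
    have h4 : L^β * ‖u‖ ≤ Kc * ‖D u‖ := by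
      have h3' : L^n * (L^β * ‖u‖) ≤ L^n * (Kc * ‖D u‖) := by
        calc L^n * (L^β * ‖u‖) = L^n * L^β * ‖u‖ := by ring
          _ ≤ (Kc * L^n) * ‖D u‖ := h3
          _ = L^n * (Kc * ‖D u‖) := by ring
      exact le_of_mul_le_mul_left h3' hLn
    calc L^β * ‖u‖ ≤ Kc * ‖D u‖ := h4
      _ ≤ K * ‖D u‖ := mul_le_mul_of_nonneg_right (by linarith) (norm_nonneg _)
  set x := L ^ ((2:ℝ)/3*β) with hxdef
  have hx1 : (1:ℝ) ≤ x := Real.one_le_rpow hL1 (by positivity)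
  have hx0 : (0:ℝ) ≤ x := by linarith
  have h13 : 13*K ≤ L^(β/3) := by
    have h0 : ((13*K) ^ ((3:ℝ)/β)) ^ (β/3) ≤ L ^ (β/3) :=
      Real.rpow_le_rpow (Real.rpow_nonneg (by linarith) _) hL (by positivity)
    rw [← Real.rpow_mul (by linarith : (0:ℝ) ≤ 13*K)] at h0
    rwa [show (3:ℝ)/β * (β/3) = 1 by field_simp, Real.rpow_one] at h0
  have hsplit : x * L^(β/3) = L^β := by
    rw [hxdef, ← Real.rpow_add hL0]
    congr 1
    ring
  have hu0 : (0:ℝ) ≤ ‖u‖ := norm_nonneg u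
  have hDu2 : (2*x + 11) * ‖u‖ ≤ ‖D u‖ := by
    have hβK : K * (2*x + 11) ≤ L^β := by
      calc K * (2*x+11) ≤ 13*K*x := by nlinarith [hx1, hK0]
        _ ≤ L^(β/3) * x := mul_le_mul_of_nonneg_right h13 hx0
        _ = x * L^(β/3) := by ring
        _ = L^β := hsplit
    have h5 : K * ((2*x+11) * ‖u‖) ≤ K * ‖D u‖ := by
      calc K * ((2*x+11)*‖u‖) = (K * (2*x+11)) * ‖u‖ := by ring
        _ ≤ L^β * ‖u‖ := mul_le_mul_of_nonneg_right hβK hu0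
        _ ≤ K * ‖D u‖ := hDu
    exact le_of_mul_le_mul_left h5 hK0
  have hnorm : ‖D u‖ - ‖v‖ ≤ ‖D u - v‖ := norm_sub_norm_le _ _
  have hsub : (2*x + 10) * ‖u‖ ≤ ‖D u - v‖ := by linarith
  have hxu : (0:ℝ) ≤ x * ‖u‖ := mul_nonneg hx0 hu0
  constructor
  · linarith
  · have h2a : Real.sqrt (‖u‖^2+‖v‖^2) ≤ (11/10)*‖u‖ := by
      have hb : ‖u‖^2 + ‖v‖^2 ≤ ((11/10)*‖u‖)^2 := by
        nlinarith [pow_le_pow_left₀ (norm_nonneg v) huv 2, hu0]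
      calc Real.sqrt (‖u‖^2+‖v‖^2) ≤ Real.sqrt (((11/10)*‖u‖)^2) := Real.sqrt_le_sqrt hb
        _ = (11/10)*‖u‖ := Real.sqrt_sq (by positivity)
    have h2b : ‖D u - v‖ ≤ Real.sqrt (‖D u - v‖^2 + ‖u‖^2) := by
      calc ‖D u - v‖ = Real.sqrt (‖D u - v‖^2) := (Real.sqrt_sq (norm_nonneg _)).symm
        _ ≤ Real.sqrt (‖D u - v‖^2 + ‖u‖^2) := Real.sqrt_le_sqrt (le_add_of_nonneg_right (sq_nonneg ‖u‖))
    calc x * Real.sqrt (‖u‖^2+‖v‖^2) ≤ x * ((11/10)*‖u‖) :=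
        mul_le_mul_of_nonneg_left h2a hx0
      _ ≤ (2*x+10)*‖u‖ := by nlinarith [hxu, hu0]
      _ ≤ ‖D u - v‖ := hsub
      _ ≤ Real.sqrt (‖D u - v‖^2 + ‖u‖^2) := h2b

end AuxStatement0
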